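/- Let A be an n×n matrix with entries in {0,1} such that the number of pairs (i,j) with a_{ij}=1 is at least (99/100)n². Then there exists a set Z ⊆ {1,…,n} with |Z| ≥ 4n/5 such that for every k ≥ 2 and every i,j ∈ Z, the (i,j) entry of A^k satisfies (A^k)_{ij} ≥ (4/5)·(3/5)^{k-2}·n^{k-1}. -/
import Mathlib


/-- If an `n × n` 0-1 matrix has at least `(99/100) n²` entries equal to `1`,
then there is a set `Z ⊆ {1,…,n}` with `|Z| ≥ 4n/5` such that for every `k ≥ 2` and all
`i, j ∈ Z` we have `(A^k)_{ij} ≥ (4/5)·(3/5)^(k-2)·n^(k-1)`. -/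
theorem stmt0 (n : ℕ) (A : Matrix (Fin n) (Fin n) ℝ)
    (h01 : ∀ i j, A i j = 0 ∨ A i j = 1)
    (hcard : (99 / 100 : ℝ) * (n : ℝ) ^ 2 ≤
      ((Finset.univ.filter fun p : Fin n × Fin n => A p.1 p.2 = 1).card : ℝ)) :
    ∃ Z : Finset (Fin n), 4 * (n : ℝ) / 5 ≤ (Z.card : ℝ) ∧
      ∀ k : ℕ, 2 ≤ k → ∀ i ∈ Z, ∀ j ∈ Z,
        (4 / 5 : ℝ) * (3 / 5 : ℝ) ^ (k - 2) * (n : ℝ) ^ (k - 1) ≤ (A ^ k) i j := by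
  classical
  rcases Nat.eq_zero_or_pos n with hn0 | hnpos
  · subst hn0
    refine ⟨∅, by norm_num, fun k hk i hi => (Finset.notMem_empty i hi).elim⟩
  have hn : (0:ℝ) < n := by exact_mod_cast hnpos
  have hA0 : ∀ i j, (0:ℝ) ≤ A i j := fun i j => by
    rcases h01 i j with h | h <;> simp [h]
  have hpow : ∀ k (i j : Fin n), (0:ℝ) ≤ (A ^ k) i j := by
    intro k
    induction k with
    | zero => intro i j; simp [Matrix.one_apply]; split <;> norm_num
    | succ k ih =>
      intro i j
      rw [pow_succ', Matrix.mul_apply]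
      exact Finset.sum_nonneg fun l _ => mul_nonneg (hA0 i l) (ih l j)
  set B : Fin n → ℕ := fun i => (Finset.univ.filter fun j => A i j = 0).card with hB
  set C : Fin n → ℕ := fun j => (Finset.univ.filter fun i => A i j = 0).card with hC
  -- total number of zero entries
  set Zc : ℕ := (Finset.univ.filter fun p : Fin n × Fin n => A p.1 p.2 = 0).card with hZc
  have hsplit : (Finset.univ.filter fun p : Fin n × Fin n => A p.1 p.2 = 1).card + Zc
      = n * n := by
    have hneg : (Finset.univ.filter fun p : Fin n × Fin n => ¬ A p.1 p.2 = 1)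
        = Finset.univ.filter fun p : Fin n × Fin n => A p.1 p.2 = 0 := by
      apply Finset.filter_congr
      intro p _
      rcases h01 p.1 p.2 with h | h <;> simp [h]
    rw [hZc, ← hneg, Finset.card_filter_add_card_filter_not]
    simp
  have hZcle : (Zc : ℝ) ≤ (n:ℝ)^2 / 100 := by
    have h1 : ((Finset.univ.filter fun p : Fin n × Fin n => A p.1 p.2 = 1).card : ℝ) + (Zc:ℝ)
        = (n:ℝ) * n := by exact_mod_cast congrArg (Nat.cast : ℕ → ℝ) hsplit
    nlinarith [hcard]
  have hsumB : ∑ i, B i = Zc := by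
    rw [hZc, Finset.card_filter, ← Finset.univ_product_univ, Finset.sum_product]
    exact Finset.sum_congr rfl fun i _ => Finset.card_filter _ _
  have hsumC : ∑ j, C j = Zc := by
    rw [hZc, Finset.card_filter, ← Finset.univ_product_univ, Finset.sum_product,
      Finset.sum_comm]
    exact Finset.sum_congr rfl fun j _ => Finset.card_filter _ _
  -- good rows and columns
  set R : Finset (Fin n) := Finset.univ.filter (fun i => (B i : ℝ) ≤ (n:ℝ)/10) with hR
  set Cg : Finset (Fin n) := Finset.univ.filter (fun j => (C j : ℝ) ≤ (n:ℝ)/10) with hCg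
  -- generic bad-count bound
  have badbound : ∀ (f : Fin n → ℕ), (∑ i, f i = Zc) →
      ((Finset.univ.filter fun i => ¬ ((f i : ℝ) ≤ (n:ℝ)/10)).card : ℝ) ≤ (n:ℝ)/10 := by
    intro f hf
    set bad := Finset.univ.filter fun i => ¬ ((f i : ℝ) ≤ (n:ℝ)/10) with hbad
    have h1 : (bad.card : ℝ) * ((n:ℝ)/10) ≤ ∑ i ∈ bad, (f i : ℝ) := by
      have := Finset.card_nsmul_le_sum bad (fun i => (f i : ℝ)) ((n:ℝ)/10)
        (fun i hi => le_of_lt (lt_of_not_ge (Finset.mem_filter.mp hi).2))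
      simpa [nsmul_eq_mul] using this
    have h2 : ∑ i ∈ bad, (f i : ℝ) ≤ ∑ i, (f i : ℝ) :=
      Finset.sum_le_sum_of_subset_of_nonneg (Finset.subset_univ _)
        (fun i _ _ => by positivity)
    have h3 : ∑ i, (f i : ℝ) = (Zc : ℝ) := by exact_mod_cast congrArg (Nat.cast : ℕ → ℝ) hf
    have h4 : (bad.card : ℝ) * ((n:ℝ)/10) ≤ (n:ℝ)^2/100 := by linarith
    nlinarith
  have hRcard : (9:ℝ) * n / 10 ≤ (R.card : ℝ) := by
    have hsp := Finset.card_filter_add_card_filter_not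
      (s := Finset.univ) (p := fun i => (B i : ℝ) ≤ (n:ℝ)/10)
    have hb := badbound B hsumB
    have : (R.card : ℝ) + ((Finset.univ.filter fun i => ¬ ((B i : ℝ) ≤ (n:ℝ)/10)).card : ℝ)
        = n := by
      rw [hR]; exact_mod_cast congrArg (Nat.cast : ℕ → ℝ) (by simpa using hsp)
    linarith
  have hCgcard : (9:ℝ) * n / 10 ≤ (Cg.card : ℝ) := by
    have hsp := Finset.card_filter_add_card_filter_not
      (s := Finset.univ) (p := fun j => (C j : ℝ) ≤ (n:ℝ)/10)
    have hb := badbound C hsumC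
    have : (Cg.card : ℝ) + ((Finset.univ.filter fun j => ¬ ((C j : ℝ) ≤ (n:ℝ)/10)).card : ℝ)
        = n := by
      rw [hCg]; exact_mod_cast congrArg (Nat.cast : ℕ → ℝ) (by simpa using hsp)
    linarith
  -- intersection cardinality helper
  have inter_card : ∀ S T : Finset (Fin n),
      (S.card : ℝ) + (T.card : ℝ) - n ≤ ((S ∩ T).card : ℝ) := by
    intro S T
    have h1 : (S ∪ T).card + (S ∩ T).card = S.card + T.card :=
      Finset.card_union_add_card_inter S T
    have h2 : (S ∪ T).card ≤ n := by
      simpa using Finset.card_le_univ (S ∪ T)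
    have h1' : ((S ∪ T).card : ℝ) + ((S ∩ T).card : ℝ) = (S.card : ℝ) + T.card := by
      exact_mod_cast congrArg (Nat.cast : ℕ → ℝ) h1
    have h2' : ((S ∪ T).card : ℝ) ≤ n := by exact_mod_cast h2
    linarith
  set Zs : Finset (Fin n) := R ∩ Cg with hZs
  have hZscard : 4 * (n:ℝ) / 5 ≤ (Zs.card : ℝ) := by
    have := inter_card R Cg
    linarith
  -- row/column ones counts
  set rowOnes : Fin n → Finset (Fin n) := fun i => Finset.univ.filter fun l => A i l = 1
    with hrowOnes
  set colOnes : Fin n → Finset (Fin n) := fun j => Finset.univ.filter fun l => A l j = 1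
    with hcolOnes
  have hrow : ∀ i ∈ R, (9:ℝ) * n / 10 ≤ ((rowOnes i).card : ℝ) := by
    intro i hi
    have hBi : (B i : ℝ) ≤ (n:ℝ)/10 := (Finset.mem_filter.mp hi).2
    have hsp : (rowOnes i).card + B i = n := by
      have hneg : (Finset.univ.filter fun l => ¬ A i l = 1)
          = Finset.univ.filter fun l => A i l = 0 := by
        apply Finset.filter_congr
        intro l _
        rcases h01 i l with h | h <;> simp [h]
      rw [hrowOnes, hB]
      simp only [← hneg]
      rw [Finset.card_filter_add_card_filter_not]
      simp
    have : ((rowOnes i).card : ℝ) + (B i : ℝ) = n := by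
      exact_mod_cast congrArg (Nat.cast : ℕ → ℝ) hsp
    linarith
  have hcol : ∀ j ∈ Cg, (9:ℝ) * n / 10 ≤ ((colOnes j).card : ℝ) := by
    intro j hj
    have hCj : (C j : ℝ) ≤ (n:ℝ)/10 := (Finset.mem_filter.mp hj).2
    have hsp : (colOnes j).card + C j = n := by
      have hneg : (Finset.univ.filter fun l => ¬ A l j = 1)
          = Finset.univ.filter fun l => A l j = 0 := by
        apply Finset.filter_congr
        intro l _
        rcases h01 l j with h | h <;> simp [h]
      rw [hcolOnes, hC]
      simp only [← hneg]
      rw [Finset.card_filter_add_card_filter_not]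
      simp
    have : ((colOnes j).card : ℝ) + (C j : ℝ) = n := by
      exact_mod_cast congrArg (Nat.cast : ℕ → ℝ) hsp
    linarith
  -- the key induction
  have key : ∀ m : ℕ, ∀ i ∈ Zs, ∀ j ∈ Zs,
      (4/5 : ℝ) * (3/5 : ℝ) ^ m * (n:ℝ) ^ (m+1) ≤ (A ^ (m+2)) i j := by
    intro m
    induction m with
    | zero =>
      intro i hi j hj
      have hiR : i ∈ R := (Finset.mem_inter.mp hi).1
      have hjC : j ∈ Cg := (Finset.mem_inter.mp hj).2
      set S := rowOnes i ∩ colOnes j with hS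
      have hScard : 4 * (n:ℝ) / 5 ≤ (S.card : ℝ) := by
        have := inter_card (rowOnes i) (colOnes j)
        have h1 := hrow i hiR
        have h2 := hcol j hjC
        linarith
      have happ : (A ^ 2) i j = ∑ l, A i l * A l j := by
        rw [pow_two, Matrix.mul_apply]
      have hterm : ∀ l ∈ S, (1:ℝ) ≤ A i l * A l j := by
        intro l hl
        obtain ⟨hl1, hl2⟩ := Finset.mem_inter.mp hl
        have e1 : A i l = 1 := (Finset.mem_filter.mp hl1).2
        have e2 : A l j = 1 := (Finset.mem_filter.mp hl2).2
        rw [e1, e2]; norm_num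
      have h1 : (S.card : ℝ) * 1 ≤ ∑ l ∈ S, A i l * A l j := by
        simpa [nsmul_eq_mul] using Finset.card_nsmul_le_sum S (fun l => A i l * A l j) 1 hterm
      have h2 : ∑ l ∈ S, A i l * A l j ≤ ∑ l, A i l * A l j :=
        Finset.sum_le_sum_of_subset_of_nonneg (Finset.subset_univ _)
          (fun l _ _ => mul_nonneg (hA0 i l) (hA0 l j))
      rw [happ]
      simp only [pow_zero, pow_one]
      nlinarith
    | succ m ih =>
      intro i hi j hj
      have hiR : i ∈ R := (Finset.mem_inter.mp hi).1
      set T := rowOnes i ∩ Zs with hT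
      have hTcard : 3 * (n:ℝ) / 5 ≤ (T.card : ℝ) := by
        have := inter_card (rowOnes i) Zs
        have h1 := hrow i hiR
        linarith
      have happ : (A ^ (m+3)) i j = ∑ l, A i l * (A ^ (m+2)) l j := by
        rw [show m+3 = (m+2)+1 from rfl, pow_succ', Matrix.mul_apply]
      set c : ℝ := (4/5 : ℝ) * (3/5 : ℝ) ^ m * (n:ℝ) ^ (m+1) with hc
      have hcnn : 0 ≤ c := by positivity
      have hterm : ∀ l ∈ T, c ≤ A i l * (A ^ (m+2)) l j := by
        intro l hl
        obtain ⟨hl1, hl2⟩ := Finset.mem_inter.mp hl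
        have e1 : A i l = 1 := (Finset.mem_filter.mp hl1).2
        rw [e1, one_mul]
        exact ih l hl2 j hj
      have h1 : (T.card : ℝ) * c ≤ ∑ l ∈ T, A i l * (A ^ (m+2)) l j := by
        simpa [nsmul_eq_mul] using
          Finset.card_nsmul_le_sum T (fun l => A i l * (A ^ (m+2)) l j) c hterm
      have h2 : ∑ l ∈ T, A i l * (A ^ (m+2)) l j ≤ ∑ l, A i l * (A ^ (m+2)) l j :=
        Finset.sum_le_sum_of_subset_of_nonneg (Finset.subset_univ _)
          (fun l _ _ => mul_nonneg (hA0 i l) (hpow (m+2) l j))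
      have heq : (4/5 : ℝ) * (3/5 : ℝ) ^ (m+1) * (n:ℝ) ^ (m+2) = (3 * (n:ℝ) / 5) * c := by
        rw [hc]; ring
      rw [show m+1+2 = m+3 from rfl, happ, heq]
      nlinarith
  refine ⟨Zs, hZscard, ?_⟩
  intro k hk i hi j hj
  obtain ⟨m, rfl⟩ : ∃ m, k = m + 2 := ⟨k - 2, by omega⟩
  have h2 : m + 2 - 2 = m := by omega
  have h1 : m + 2 - 1 = m + 1 := by omega
  rw [h2, h1]
  exact key m i hi j hj
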